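/- Assume 0 < b(x) ≤ b̄ ≤ 1 for a.e. x ∈ (0,1). Then there is no interior subsonic solution to the degenerate elliptic equation [((1/ρ) - (1/ρ³))ρ_x]_x + (1/τ)(1/ρ)_x - (ρ - b) = 0 with sonic boundary ρ(0) = ρ(1) = 1, i.e. no weak solution with ρ ≥ 1 on [0,1], ρ > 1 on a set of positive measure, and (ρ-1)² ∈ H¹₀(0,1). -/

import Mathlib

open Set Filter MeasureTheory intervalIntegral Topology

noncomputable def psiF (s : ℝ) : ℝ := 2 * Real.sqrt s - 2 * Real.log (1 + Real.sqrt s)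

lemma psiF_zero : psiF 0 = 0 := by simp [psiF]

lemma psiF_hasDerivAt {s : ℝ} (hs : 0 < s) :
    HasDerivAt psiF (1 / (1 + Real.sqrt s)) s := by
  have h1 : Real.sqrt s ≠ 0 := ne_of_gt (Real.sqrt_pos.2 hs)
  have h1' : (0:ℝ) < Real.sqrt s := Real.sqrt_pos.2 hs
  have h2 : (0:ℝ) < 1 + Real.sqrt s := by positivity
  have hsq := Real.hasDerivAt_sqrt (ne_of_gt hs)
  have hlog : HasDerivAt (fun t : ℝ => Real.log (1 + Real.sqrt t))
      ((1 + Real.sqrt s)⁻¹ * (1 / (2 * Real.sqrt s))) s := by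
    have := (Real.hasDerivAt_log (ne_of_gt h2)).comp s ((hasDerivAt_const s (1:ℝ)).add hsq)
    simpa [Function.comp_def, Pi.add_def] using this
  have h := (hsq.const_mul (2:ℝ)).sub (hlog.const_mul (2:ℝ))
  have : HasDerivAt psiF (2 * (1 / (2 * Real.sqrt s)) - 2 * ((1 + Real.sqrt s)⁻¹ * (1 / (2 * Real.sqrt s)))) s := h
  convert this using 1
  field_simp
  ring

lemma psiF_contAt : ContinuousAt psiF 0 := by
  have h1 : ContinuousAt (fun s : ℝ => 1 + Real.sqrt s) 0 :=
    (continuous_const.add Real.continuous_sqrt).continuousAt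
  have h2 : ContinuousAt (fun s : ℝ => Real.log (1 + Real.sqrt s)) 0 :=
    Filter.Tendsto.comp (Real.continuousAt_log (show (1:ℝ) + Real.sqrt 0 ≠ 0 by norm_num)) h1
  exact ((Real.continuous_sqrt.continuousAt).const_mul 2).sub (h2.const_mul 2)

lemma psiF_hasDerivWithinAt_zero : HasDerivWithinAt psiF 1 (Set.Ici 0) 0 := by
  rw [hasDerivWithinAt_iff_tendsto_slope]
  have hset : Set.Ici (0:ℝ) \ {0} = Set.Ioi 0 := by
    ext x; simp [lt_iff_le_and_ne, eq_comm]
  rw [hset]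
  have key : Tendsto (fun s => psiF s / s) (𝓝[>] (0:ℝ)) (𝓝 1) := by
    apply HasDerivAt.lhopital_zero_nhdsGT (f' := fun s => 1 / (1 + Real.sqrt s))
      (g' := fun _ => (1:ℝ))
    · filter_upwards [self_mem_nhdsWithin] with s hs
      exact psiF_hasDerivAt hs
    · exact Eventually.of_forall fun s => hasDerivAt_id s
    · exact Eventually.of_forall fun _ => one_ne_zero
    · have := psiF_contAt.tendsto
      rw [psiF_zero] at this
      exact this.mono_left nhdsWithin_le_nhds
    · exact (continuous_id.tendsto 0).mono_left nhdsWithin_le_nhds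
    · have : ContinuousAt (fun s : ℝ => 1 / (1 + Real.sqrt s)) 0 := by
        apply ContinuousAt.div continuousAt_const
        · exact (continuous_const.add Real.continuous_sqrt).continuousAt
        · simp
      have h := this.tendsto.mono_left (nhdsWithin_le_nhds (s := Set.Ioi (0:ℝ)))
      simpa using h
  refine key.congr' ?_
  filter_upwards [self_mem_nhdsWithin] with s hs
  simp [slope_def_field, psiF_zero, div_eq_mul_inv, mul_comm]

lemma psiF_hasDerivWithinAt {s : ℝ} (hs : 0 ≤ s) :
    HasDerivWithinAt psiF (1 / (1 + Real.sqrt s)) (Set.Ici 0) s := by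
  rcases eq_or_lt_of_le hs with h | h
  · subst h
    simpa using psiF_hasDerivWithinAt_zero
  · exact (psiF_hasDerivAt h).hasDerivWithinAt


/-- Non-existence of interior subsonic solutions for a supersonic doping profile:
if `0 < b ≤ b̄ ≤ 1` a.e. on `(0,1)`, there is no weak solution `ρ` of the
degenerate equation `[((1/ρ) - 1/ρ³)ρ_x]_x + (1/τ)(1/ρ)_x - (ρ - b) = 0` with
sonic boundary `ρ(0) = ρ(1) = 1`, `ρ ≥ 1` on `[0,1]`, `(ρ-1)² ∈ H¹₀(0,1)`, and
`ρ > 1` somewhere in `(0,1)`. -/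
theorem stmt_10 (τ bbar : ℝ) (hτ : 0 < τ) (hbbar : bbar ≤ 1)
    (b ρ w' : ℝ → ℝ)
    (hb : ∀ᵐ x ∂MeasureTheory.volume, x ∈ Set.Ioo (0:ℝ) 1 → 0 < b x ∧ b x ≤ bbar)
    (hbmeas : Measurable b)
    (hρc : ContinuousOn ρ (Set.Icc (0:ℝ) 1))
    (hρge : ∀ x ∈ Set.Icc (0:ℝ) 1, 1 ≤ ρ x)
    (hρ0 : ρ 0 = 1) (hρ1 : ρ 1 = 1)
    (hw : ∀ x ∈ Set.Icc (0:ℝ) 1,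
      HasDerivWithinAt (fun y => (ρ y - 1)^2) (w' x) (Set.Icc (0:ℝ) 1) x)
    (hw'c : ContinuousOn w' (Set.Icc (0:ℝ) 1))
    (hweak : ∀ φ φ' : ℝ → ℝ,
      (∀ x ∈ Set.Icc (0:ℝ) 1, HasDerivWithinAt φ (φ' x) (Set.Icc (0:ℝ) 1) x) →
      ContinuousOn φ' (Set.Icc (0:ℝ) 1) → φ 0 = 0 → φ 1 = 0 →
      (1/2) * (∫ x in (0:ℝ)..1, ((ρ x + 1)/(ρ x)^3) * w' x * φ' x)
        + (1/τ) * (∫ x in (0:ℝ)..1, φ' x / ρ x)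
        + (∫ x in (0:ℝ)..1, (ρ x - b x) * φ x) = 0)
    (hsub : ∃ x ∈ Set.Ioo (0:ℝ) 1, 1 < ρ x) :
    False := by
  -- The test function and its derivative
  have hφ0 : (fun y => (ρ y - 1)^2) 0 = 0 := by simp [hρ0]
  have hφ1 : (fun y => (ρ y - 1)^2) 1 = 0 := by simp [hρ1]
  have E := hweak (fun y => (ρ y - 1)^2) w' hw hw'c hφ0 hφ1
  -- positivity of ρ on [0,1]
  have hρpos : ∀ x ∈ Set.Icc (0:ℝ) 1, (0:ℝ) < ρ x := fun x hx => lt_of_lt_of_le one_pos (hρge x hx)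
  -- Step 1: the τ-term vanishes
  have hG : ∀ x ∈ Set.Icc (0:ℝ) 1,
      HasDerivWithinAt (fun y => psiF ((ρ y - 1)^2)) (w' x / ρ x) (Set.Icc (0:ℝ) 1) x := by
    intro x hx
    have hmaps : Set.MapsTo (fun y => (ρ y - 1)^2) (Set.Icc (0:ℝ) 1) (Set.Ici (0:ℝ)) :=
      fun y _ => show (0:ℝ) ≤ (ρ y - 1)^2 from sq_nonneg _
    have h := (psiF_hasDerivWithinAt (sq_nonneg (ρ x - 1))).comp x (hw x hx) hmaps
    have hsqrt : Real.sqrt ((ρ x - 1)^2) = ρ x - 1 := Real.sqrt_sq (by linarith [hρge x hx])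
    have hρx : ρ x ≠ 0 := ne_of_gt (hρpos x hx)
    refine h.congr_deriv ?_
    symm
    rw [hsqrt]
    have : 1 + (ρ x - 1) = ρ x := by ring
    rw [this, div_eq_mul_inv, one_div, mul_comm]
  have hGcont : ContinuousOn (fun y => psiF ((ρ y - 1)^2)) (Set.Icc (0:ℝ) 1) :=
    fun x hx => (hG x hx).continuousWithinAt
  have hcτ : ContinuousOn (fun x => w' x / ρ x) (Set.Icc (0:ℝ) 1) :=
    hw'c.div hρc (fun x hx => ne_of_gt (hρpos x hx))
  have hτint : (∫ x in (0:ℝ)..1, w' x / ρ x) = 0 := by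
    have hFTC := intervalIntegral.integral_eq_sub_of_hasDeriv_right_of_le (f := fun y => psiF ((ρ y - 1)^2))
      (f' := fun x => w' x / ρ x) (by norm_num) hGcont
      (fun x hx => (((hG x (Set.Ioo_subset_Icc_self hx)).hasDerivAt
        (Icc_mem_nhds hx.1 hx.2)).hasDerivWithinAt))
      (by
        apply ContinuousOn.intervalIntegrable
        rwa [Set.uIcc_of_le (by norm_num : (0:ℝ) ≤ 1)])
    rw [hFTC]
    simp [hρ0, hρ1, psiF_zero]
  -- Step 2: first term nonnegative
  have hI1 : 0 ≤ ∫ x in (0:ℝ)..1, ((ρ x + 1)/(ρ x)^3) * w' x * w' x := by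
    apply intervalIntegral.integral_nonneg (by norm_num : (0:ℝ) ≤ 1)
    intro u hu
    have h1 := hρge u hu
    have : 0 ≤ (ρ u + 1)/(ρ u)^3 := by positivity
    rw [mul_assoc]
    exact mul_nonneg this (mul_self_nonneg _)
  -- Interval integrability facts
  have hρae : AEMeasurable ρ (MeasureTheory.volume.restrict (Set.Ioc (0:ℝ) 1)) :=
    (hρc.aemeasurable measurableSet_Icc).mono_measure
      (MeasureTheory.Measure.restrict_mono Set.Ioc_subset_Icc_self le_rfl)
  obtain ⟨C, hC⟩ := isCompact_Icc.exists_bound_of_continuousOn hρc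
  have hC1 : 1 ≤ C := by
    have := hC 0 (by norm_num)
    rw [hρ0] at this
    simpa using this
  have hfint : IntervalIntegrable (fun x => (ρ x - b x) * (ρ x - 1)^2)
      MeasureTheory.volume 0 1 := by
    rw [intervalIntegrable_iff_integrableOn_Ioc_of_le (by norm_num : (0:ℝ) ≤ 1)]
    have hm : MeasureTheory.AEStronglyMeasurable (fun x => (ρ x - b x) * (ρ x - 1)^2)
        (MeasureTheory.volume.restrict (Set.Ioc (0:ℝ) 1)) := by
      have h2 : AEMeasurable (fun x => (ρ x - 1)^2)
          (MeasureTheory.volume.restrict (Set.Ioc (0:ℝ) 1)) := by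
        have h := hρae.sub (aemeasurable_const (b := (1:ℝ)))
        exact (hρae.sub_const 1).pow_const 2
      exact ((hρae.sub hbmeas.aemeasurable).mul h2).aestronglyMeasurable
    apply MeasureTheory.Integrable.mono' (MeasureTheory.integrable_const ((C+2)^3)) hm
    rw [MeasureTheory.ae_restrict_iff' measurableSet_Ioc]
    filter_upwards [hb] with x hbx hxIoc
    rcases lt_or_ge x 1 with hx1 | hx1
    · have hxIoo : x ∈ Set.Ioo (0:ℝ) 1 := ⟨hxIoc.1, hx1⟩
      obtain ⟨hb0, hb1⟩ := hbx hxIoo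
      have hxIcc : x ∈ Set.Icc (0:ℝ) 1 := Set.Ioo_subset_Icc_self hxIoo
      have hρb := hC x hxIcc
      have hρx1 := hρge x hxIcc
      have habs : |ρ x| ≤ C := by simpa using hρb
      have hbb : b x ≤ 1 := le_trans hb1 hbbar
      have h1 : |ρ x - b x| ≤ C + 2 := by
        rw [abs_le] at habs ⊢
        constructor <;> nlinarith
      have h2 : (ρ x - 1)^2 ≤ (C + 2)^2 := by
        rw [abs_le] at habs
        nlinarith
      calc ‖(ρ x - b x) * (ρ x - 1)^2‖ = |ρ x - b x| * |(ρ x - 1)^2| := by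
            rw [norm_mul]; rfl
        _ ≤ (C + 2) * (C + 2)^2 := by
            apply mul_le_mul h1 (by rwa [abs_of_nonneg (sq_nonneg _)]) (abs_nonneg _) (by linarith)
        _ = (C + 2)^3 := by ring
    · have hx1' : x = 1 := le_antisymm hxIoc.2 hx1
      subst hx1'
      rw [hρ1]
      simp
      positivity
  have hg3cont : ContinuousOn (fun x => (ρ x - 1)^3) (Set.Icc (0:ℝ) 1) := by
    exact ((hρc.sub continuousOn_const).pow 3)
  have hg3int : IntervalIntegrable (fun x => (ρ x - 1)^3) MeasureTheory.volume 0 1 := by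
    apply ContinuousOn.intervalIntegrable
    rwa [Set.uIcc_of_le (by norm_num : (0:ℝ) ≤ 1)]
  -- Step 3: the last term dominates ∫ (ρ-1)^3
  have hI3 : (∫ x in (0:ℝ)..1, (ρ x - 1)^3)
      ≤ ∫ x in (0:ℝ)..1, (ρ x - b x) * (ρ x - 1)^2 := by
    apply intervalIntegral.integral_mono_ae_restrict (by norm_num : (0:ℝ) ≤ 1) hg3int hfint
    rw [Filter.EventuallyLE, MeasureTheory.ae_restrict_iff' measurableSet_Icc]
    filter_upwards [hb] with x hbx hxIcc
    rcases eq_or_lt_of_le hxIcc.1 with h0 | h0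
    · rw [← h0]; simp [hρ0]
    rcases eq_or_lt_of_le hxIcc.2 with h1 | h1
    · rw [h1]; simp [hρ1]
    obtain ⟨hb0, hb1⟩ := hbx ⟨h0, h1⟩
    have hρx := hρge x hxIcc
    have hbb : b x ≤ 1 := le_trans hb1 hbbar
    nlinarith [sq_nonneg (ρ x - 1)]
  -- Step 4: ∫ (ρ-1)^3 > 0
  have hC3 : 0 < ∫ x in (0:ℝ)..1, (ρ x - 1)^3 := by
    obtain ⟨x₀, hx₀, hρx₀⟩ := hsub
    have hx₀Icc : x₀ ∈ Set.Icc (0:ℝ) 1 := Set.Ioo_subset_Icc_self hx₀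
    have hcw : ContinuousWithinAt ρ (Set.Icc (0:ℝ) 1) x₀ := hρc x₀ hx₀Icc
    have hev : ∀ᶠ y in nhdsWithin x₀ (Set.Icc (0:ℝ) 1), 1 < ρ y :=
      hcw.eventually (eventually_gt_nhds hρx₀)
    rw [eventually_iff, mem_nhdsWithin] at hev
    obtain ⟨U, hUopen, hx₀U, hU⟩ := hev
    obtain ⟨δ, hδ, hball⟩ := Metric.isOpen_iff.1 hUopen x₀ hx₀U
    set u := max (x₀ - δ/2) (x₀/2) with hu_def
    set v := min (x₀ + δ/2) ((x₀+1)/2) with hv_def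
    have h0u : 0 < u := lt_max_of_lt_right (by linarith [hx₀.1])
    have hux : u < x₀ := max_lt (by linarith) (by linarith [hx₀.1])
    have hxv : x₀ < v := lt_min (by linarith) (by linarith [hx₀.2])
    have hv1 : v < 1 := min_lt_of_right_lt (by linarith [hx₀.2])
    have huv : u < v := lt_trans hux hxv
    have hsubI : Set.Icc u v ⊆ Set.Icc (0:ℝ) 1 := fun y hy =>
      ⟨le_of_lt (lt_of_lt_of_le h0u hy.1), le_of_lt (lt_of_le_of_lt hy.2 hv1)⟩
    have hposon : ∀ y ∈ Set.Ioo u v, 1 < ρ y := by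
      intro y hy
      have hyIcc : y ∈ Set.Icc (0:ℝ) 1 := hsubI (Set.Ioo_subset_Icc_self hy)
      have h1 : x₀ - δ/2 ≤ u := le_max_left _ _
      have h2 : v ≤ x₀ + δ/2 := min_le_left _ _
      have hyball : y ∈ Metric.ball x₀ δ := by
        rw [Metric.mem_ball, Real.dist_eq, abs_sub_lt_iff]
        constructor <;> [linarith [hy.2]; linarith [hy.1]]
      exact hU ⟨hball hyball, hyIcc⟩
    have hmono : ∀ c d : ℝ, 0 ≤ c → c ≤ d → d ≤ 1 →
        IntervalIntegrable (fun x => (ρ x - 1)^3) MeasureTheory.volume c d := by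
      intro c d hc hcd hd1
      apply hg3int.mono_set
      rw [Set.uIcc_of_le hcd, Set.uIcc_of_le (by norm_num : (0:ℝ) ≤ 1)]
      exact Set.Icc_subset_Icc hc hd1
    have hint0u := hmono 0 u le_rfl (le_of_lt h0u) (by linarith)
    have hintuv := hmono u v (le_of_lt h0u) (le_of_lt huv) (le_of_lt hv1)
    have hintv1 := hmono v 1 (by linarith) (le_of_lt hv1) le_rfl
    have hmid : 0 < ∫ x in u..v, (ρ x - 1)^3 := by
      apply intervalIntegral.intervalIntegral_pos_of_pos_on hintuv _ huv
      intro y hy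
      exact pow_pos (by linarith [hposon y hy]) 3
    have hleft : 0 ≤ ∫ x in (0:ℝ)..u, (ρ x - 1)^3 := by
      apply intervalIntegral.integral_nonneg (le_of_lt h0u)
      intro y hy
      exact pow_nonneg (by linarith [hρge y ⟨hy.1, by linarith [hy.2]⟩]) 3
    have hright : 0 ≤ ∫ x in v..(1:ℝ), (ρ x - 1)^3 := by
      apply intervalIntegral.integral_nonneg (le_of_lt hv1)
      intro y hy
      exact pow_nonneg (by linarith [hρge y ⟨by linarith [hy.1], hy.2⟩]) 3
    have e1 := intervalIntegral.integral_add_adjacent_intervals hint0u hintuv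
    have e2 := intervalIntegral.integral_add_adjacent_intervals (hint0u.trans hintuv) hintv1
    rw [← e2, ← e1]
    linarith
  rw [hτint] at E
  beta_reduce at E
  nlinarith [hI1, hI3, hC3]
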